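/- Theorem (left-cancellativity of the structure category): Let σ be an involutive left-non-degenerate quiver-theoretic Yang–Baxter map on a quiver 𝒜, and let C(σ) be its structure category. Then C(σ) is left-cancellative: for all morphisms f, x, y of C(σ) for which the compositions are defined, f ≫ x = f ≫ y implies x = y. -/

import Mathlib

/-!
Theorem (embedding of the quiver into the structure category):
For an involutive left-non-degenerate quiver-theoretic Yang–Baxter map `σ` on a quiver `𝒜`,
the canonical map `j : 𝒜 → C(σ)` into the structure category is injective.
-/

open CategoryTheory

universe u v

/-- A quiver over `Λ` with arrows `A`: source and target maps. -/
structure QuiverData (Λ : Type u) (A : Type v) where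
  src : A → Λ
  tgt : A → Λ

namespace QuiverData

variable {Λ : Type u} {A : Type v}

/-- The type of vertices, carrying the quiver structure whose arrows from `a` to `b`
are the elements `x : A` with `src x = a` and `tgt x = b`. -/
def V (_Q : QuiverData Λ A) : Type u := Λ

instance (Q : QuiverData Λ A) : Quiver Q.V where
  Hom a b := {x : A // Q.src x = a ∧ Q.tgt x = b}

def vert (Q : QuiverData Λ A) (l : Λ) : Q.V := l

/-- The arrow of the quiver `Q.V` corresponding to `x : A`. -/
def arr (Q : QuiverData Λ A) (x : A) {a b : Λ}
    (ha : Q.src x = a) (hb : Q.tgt x = b) : Q.vert a ⟶ Q.vert b :=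
  ⟨x, ha, hb⟩

/-- The length-two path `x|y` in the path category. -/
def path2 (Q : QuiverData Λ A) {a m b : Λ} (x y : A)
    (hx : Q.src x = a) (hx' : Q.tgt x = m) (hy : Q.src y = m) (hy' : Q.tgt y = b) :
    (Paths.of Q.V).obj (Q.vert a) ⟶ (Paths.of Q.V).obj (Q.vert b) :=
  (Paths.of Q.V).map (Q.arr x hx hx') ≫ (Paths.of Q.V).map (Q.arr y hy hy')

/-- The relation `x|y ∼ (x ⇀ y)|(x ↼ y)` on the path category, where `hd = ⇀`, `tl = ↼`. -/
inductive ybRel (Q : QuiverData Λ A) (hd tl : A → A → A) :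
    HomRel (Paths Q.V)
  | mk (x y : A) (hxy : Q.tgt x = Q.src y)
      (h1 : Q.src (hd x y) = Q.src x)
      (h2 : Q.tgt (hd x y) = Q.src (tl x y))
      (h3 : Q.tgt (tl x y) = Q.tgt y) :
      ybRel Q hd tl (Q.path2 x y rfl rfl hxy.symm rfl)
        (Q.path2 (hd x y) (tl x y) h1 rfl h2.symm h3)

/-- The structure category `C(σ)`: the quotient of the path category by the congruence
generated by `x|y ∼ (x ⇀ y)|(x ↼ y)`. -/
abbrev SC (Q : QuiverData Λ A) (hd tl : A → A → A) :=
  CategoryTheory.Quotient (Q.ybRel hd tl)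

/-- The canonical map `j` from arrows of the quiver to morphisms of the structure category. -/
def jmap (Q : QuiverData Λ A) (hd tl : A → A → A) (x : A) {a b : Λ}
    (ha : Q.src x = a) (hb : Q.tgt x = b) :
    (Quotient.functor (Q.ybRel hd tl)).obj ((Paths.of Q.V).obj (Q.vert a)) ⟶
      (Quotient.functor (Q.ybRel hd tl)).obj ((Paths.of Q.V).obj (Q.vert b)) :=
  (Quotient.functor (Q.ybRel hd tl)).map ((Paths.of Q.V).map (Q.arr x ha hb))

end QuiverData

namespace YBAux

/-- bundled context -/
structure Ctx (Λ : Type u) (A : Type v) where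
  Q : QuiverData Λ A
  hd : A → A → A
  tl : A → A → A
  hs : ∀ x y, Q.tgt x = Q.src y → Q.src (hd x y) = Q.src x
  hm : ∀ x y, Q.tgt x = Q.src y → Q.tgt (hd x y) = Q.src (tl x y)
  ht : ∀ x y, Q.tgt x = Q.src y → Q.tgt (tl x y) = Q.tgt y
  yb1 : ∀ x y z, Q.tgt x = Q.src y → Q.tgt y = Q.src z →
      hd (hd x y) (hd (tl x y) z) = hd x (hd y z)
  inv1 : ∀ x y, Q.tgt x = Q.src y → hd (hd x y) (tl x y) = x
  lndInj : ∀ x y y', Q.tgt x = Q.src y → Q.tgt x = Q.src y' → hd x y = hd x y' → y = y'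

namespace Ctx

variable {Λ : Type u} {A : Type v} (C : Ctx Λ A)

/-- arrows with source `u` -/
def Arr (u : Λ) : Type v := {x : A // C.Q.src x = u}

def lamF {X Y : C.Q.V} (e : X ⟶ Y) (w : C.Arr Y) : C.Arr X :=
  ⟨C.hd e.1 w.1, by
    rw [C.hs e.1 w.1 (e.2.2.trans w.2.symm)]; exact e.2.1⟩

lemma lamF_injective {X Y : C.Q.V} (e : X ⟶ Y) : Function.Injective (C.lamF e) := by
  intro w w' h
  exact Subtype.ext (C.lndInj e.1 w.1 w'.1 (e.2.2.trans w.2.symm) (e.2.2.trans w'.2.symm)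
    (congrArg Subtype.val h))

def LamF {X Y : C.Q.V} (p : Quiver.Path X Y) : C.Arr Y → C.Arr X :=
  @Quiver.Path.rec C.Q.V _ X (fun Z _ => C.Arr Z → C.Arr X)
    id (fun {_ _} _ e ih w => ih (C.lamF e w)) Y p

@[simp] lemma LamF_nil {X : C.Q.V} (w : C.Arr X) :
    C.LamF Quiver.Path.nil w = w := rfl

@[simp] lemma LamF_cons {X Y Z : C.Q.V} (p : Quiver.Path X Y) (e : Y ⟶ Z) (w : C.Arr Z) :
    C.LamF (p.cons e) w = C.LamF p (C.lamF e w) := rfl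

lemma LamF_injective {X Y : C.Q.V} (p : Quiver.Path X Y) : Function.Injective (C.LamF p) := by
  induction p with
  | nil => exact fun a b h => by simpa using h
  | cons p e ih =>
      intro a b h
      rw [LamF_cons, LamF_cons] at h
      exact C.lamF_injective e (ih h)

def DD {X Y : C.Q.V} (p : Quiver.Path X Y) : Multiset (C.Arr X) :=
  @Quiver.Path.rec C.Q.V _ X (fun _ _ => Multiset (C.Arr X))
    0 (fun {_ _} p' e ih => ih + {LamF C p' ⟨e.1, e.2.1⟩}) Y p

@[simp] lemma DD_nil {X : C.Q.V} : C.DD (Quiver.Path.nil : Quiver.Path X X) = 0 := rfl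

@[simp] lemma DD_cons {X Y Z : C.Q.V} (p : Quiver.Path X Y) (e : Y ⟶ Z) :
    C.DD (p.cons e) = C.DD p + {C.LamF p ⟨e.1, e.2.1⟩} := rfl


lemma LamF_comp {X Y Z : C.Q.V} (p : Quiver.Path X Y) (q : Quiver.Path Y Z) :
    ∀ w, C.LamF (p.comp q) w = C.LamF p (C.LamF q w) := by
  induction q with
  | nil => intro w; simp
  | cons q e ih =>
      intro w
      show C.LamF ((p.comp q).cons e) w = _
      rw [LamF_cons, LamF_cons, ih]

lemma DD_comp {X Y Z : C.Q.V} (p : Quiver.Path X Y) (q : Quiver.Path Y Z) :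
    C.DD (p.comp q) = C.DD p + (C.DD q).map (C.LamF p) := by
  induction q with
  | nil => simp
  | cons q e ih =>
      show C.DD ((p.comp q).cons e) = _
      erw [DD_cons, ih, DD_cons, Multiset.map_add, Multiset.map_singleton, LamF_comp, add_assoc]

lemma DD_card {X Y : C.Q.V} (p : Quiver.Path X Y) :
    Multiset.card (C.DD p) = p.length := by
  induction p with
  | nil => simp
  | cons p e ih => simp [ih]

end Ctx
end YBAux

namespace YBAux
namespace Ctx
variable {Λ : Type u} {A : Type v} (C : Ctx Λ A)

/-- the quotient functor applied to a path -/
def phim {X Y : C.Q.V} (p : Quiver.Path X Y) :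
    (Quotient.functor (C.Q.ybRel C.hd C.tl)).obj (X : Paths C.Q.V) ⟶
      (Quotient.functor (C.Q.ybRel C.hd C.tl)).obj (Y : Paths C.Q.V) :=
  (Quotient.functor (C.Q.ybRel C.hd C.tl)).map p

lemma phim_comp {X Y Z : C.Q.V} (p : Quiver.Path X Y) (q : Quiver.Path Y Z) :
    C.phim (p.comp q) = C.phim p ≫ C.phim q :=
  (Quotient.functor (C.Q.ybRel C.hd C.tl)).map_comp p q

lemma rel_inv {X Y : Paths C.Q.V} {f g : X ⟶ Y} (h : C.Q.ybRel C.hd C.tl f g) :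
    C.DD f = C.DD g ∧ ∀ w, C.LamF f w = C.LamF g w := by
  cases h with
  | mk x y hxy h1 h2 h3 =>
    constructor
    · show C.DD ((Quiver.Path.nil.cons (C.Q.arr x rfl rfl)).cons (C.Q.arr y hxy.symm rfl)) =
        C.DD ((Quiver.Path.nil.cons (C.Q.arr (C.hd x y) h1 rfl)).cons
          (C.Q.arr (C.tl x y) h2.symm h3))
      rw [DD_cons, DD_cons, DD_cons, DD_cons, DD_nil]
      have e1 : C.LamF (Quiver.Path.nil.cons (C.Q.arr x rfl rfl))
          ⟨(C.Q.arr y hxy.symm rfl).1, (C.Q.arr y hxy.symm rfl).2.1⟩ =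
          ⟨C.hd x y, C.hs x y hxy⟩ := by
        erw [LamF_cons, LamF_nil]; rfl
      have e2 : C.LamF (Quiver.Path.nil.cons (C.Q.arr (C.hd x y) h1 rfl))
          ⟨(C.Q.arr (C.tl x y) h2.symm h3).1, (C.Q.arr (C.tl x y) h2.symm h3).2.1⟩ =
          ⟨x, rfl⟩ := by
        erw [LamF_cons, LamF_nil]
        exact Subtype.ext (C.inv1 x y hxy)
      rw [e1, e2]
      have e3 : C.LamF (Quiver.Path.nil : Quiver.Path (C.Q.vert (C.Q.src x)) _)
          ⟨(C.Q.arr x rfl rfl).1, (C.Q.arr x rfl rfl).2.1⟩ = ⟨x, rfl⟩ := by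
        erw [LamF_nil]; exact Subtype.ext rfl
      have e4 : C.LamF (Quiver.Path.nil : Quiver.Path (C.Q.vert (C.Q.src x)) _)
          ⟨(C.Q.arr (C.hd x y) h1 rfl).1, (C.Q.arr (C.hd x y) h1 rfl).2.1⟩ =
          ⟨C.hd x y, C.hs x y hxy⟩ := by erw [LamF_nil]; exact Subtype.ext rfl
      have e3' : (⟨(C.Q.arr x rfl rfl).1, (C.Q.arr x rfl rfl).2.1⟩ : C.Arr _) = ⟨x, rfl⟩ :=
        Subtype.ext rfl
      rw [e3, e4, zero_add, zero_add]
      exact add_comm _ _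
    · intro w
      show C.LamF ((Quiver.Path.nil.cons (C.Q.arr x rfl rfl)).cons
          (C.Q.arr y hxy.symm rfl)) w =
        C.LamF ((Quiver.Path.nil.cons (C.Q.arr (C.hd x y) h1 rfl)).cons
          (C.Q.arr (C.tl x y) h2.symm h3)) w
      erw [LamF_cons, LamF_cons, LamF_cons, LamF_cons, LamF_nil, LamF_nil]
      exact Subtype.ext (C.yb1 x y w.1 hxy w.2.symm).symm

lemma phi_eq_inv {X Y : Paths C.Q.V} {f g : X ⟶ Y}
    (h : (Quotient.functor (C.Q.ybRel C.hd C.tl)).map f =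
      (Quotient.functor (C.Q.ybRel C.hd C.tl)).map g) :
    C.DD f = C.DD g ∧ ∀ w, C.LamF f w = C.LamF g w := by
  have h' : Relation.EqvGen (@HomRel.CompClosure _ _ (C.Q.ybRel C.hd C.tl) X Y) f g :=
    Quot.eqvGen_exact (r := @HomRel.CompClosure _ _ (C.Q.ybRel C.hd C.tl) X Y) h
  clear h
  induction h' with
  | rel f g hr =>
      cases hr with
      | intro _ _ i m₁ m₂ j hr' =>
          obtain ⟨hD, hL⟩ := C.rel_inv hr'
          have key : ∀ (m : _ ⟶ _), C.Q.ybRel C.hd C.tl m₁ m → True := fun _ _ => trivial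
          constructor
          · show C.DD (i.comp (m₁.comp j)) = C.DD (i.comp (m₂.comp j))
            erw [DD_comp, DD_comp, DD_comp, DD_comp, hD,
              Multiset.map_congr rfl fun w _ => hL w]
          · intro w
            show C.LamF (i.comp (m₁.comp j)) w = C.LamF (i.comp (m₂.comp j)) w
            erw [LamF_comp, LamF_comp, LamF_comp, LamF_comp, hL]
  | refl f => exact ⟨rfl, fun _ => rfl⟩
  | symm f g _ ih => exact ⟨ih.1.symm, fun w => (ih.2 w).symm⟩
  | trans f g k _ _ ih₁ ih₂ => exact ⟨ih₁.1.trans ih₂.1, fun w => (ih₁.2 w).trans (ih₂.2 w)⟩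

end Ctx
end YBAux

namespace YBAux
namespace Ctx
variable {Λ : Type u} {A : Type v} (C : Ctx Λ A)

/-- the arrow of the quiver corresponding to an element of `Arr X` -/
def warr {X : C.Q.V} (w : C.Arr X) : X ⟶ C.Q.vert (C.Q.tgt w.1) := ⟨w.1, w.2, rfl⟩

lemma front_core {X : C.Q.V} : ∀ {M : C.Q.V} (p : Quiver.Path X M) {Y : C.Q.V} (e : M ⟶ Y),
    ∃ q' : Quiver.Path (C.Q.vert (C.Q.tgt (C.LamF p ⟨e.1, e.2.1⟩).1)) Y,
      C.phim (p.cons e) =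
        C.phim ((C.warr (C.LamF p ⟨e.1, e.2.1⟩)).toPath.comp q') := by
  intro M p
  induction p with
  | nil =>
      intro Y e
      obtain ⟨b, hb1, hb2⟩ := e
      subst hb2
      subst hb1
      simp only [LamF_nil]
      exact ⟨Quiver.Path.nil, rfl⟩
  | cons p₀ f ih =>
      intro Y e
      obtain ⟨a, ha1, ha2⟩ := f
      subst ha2
      subst ha1
      obtain ⟨b, hb1, hb2⟩ := e
      subst hb2
      have hab : C.Q.tgt a = C.Q.src b := hb1.symm
      have hR := QuiverData.ybRel.mk (Q := C.Q) (hd := C.hd) (tl := C.tl) a b hab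
        (C.hs a b hab) (C.hm a b hab) (C.ht a b hab)
      set F : C.Q.vert (C.Q.src a) ⟶ C.Q.vert (C.Q.tgt (C.hd a b)) :=
        ⟨C.hd a b, C.hs a b hab, rfl⟩ with hF
      set T : C.Q.vert (C.Q.tgt (C.hd a b)) ⟶ C.Q.vert (C.Q.tgt b) :=
        ⟨C.tl a b, (C.hm a b hab).symm, C.ht a b hab⟩ with hT
      have hsound : C.phim ((Quiver.Path.nil.cons (C.Q.arr a rfl rfl)).cons
            (C.Q.arr b hb1 rfl)) =
          C.phim ((Quiver.Path.nil.cons F).cons T) :=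
        CategoryTheory.Quotient.sound _ hR
      obtain ⟨q₁, hq₁⟩ := ih F
      refine ⟨q₁.comp (Quiver.Path.nil.cons T), ?_⟩
      calc C.phim ((p₀.cons (C.Q.arr a rfl rfl)).cons (C.Q.arr b hb1 rfl))
          = C.phim p₀ ≫ C.phim ((Quiver.Path.nil.cons (C.Q.arr a rfl rfl)).cons
              (C.Q.arr b hb1 rfl)) :=
            C.phim_comp p₀ ((Quiver.Path.nil.cons (C.Q.arr a rfl rfl)).cons (C.Q.arr b hb1 rfl))
        _ = C.phim p₀ ≫ C.phim ((Quiver.Path.nil.cons F).cons T) := by erw [hsound]; rfl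
        _ = C.phim ((p₀.cons F).cons T) :=
            (C.phim_comp p₀ ((Quiver.Path.nil.cons F).cons T)).symm
        _ = C.phim (p₀.cons F) ≫ C.phim (Quiver.Path.nil.cons T) :=
            C.phim_comp (p₀.cons F) (Quiver.Path.nil.cons T)
        _ = C.phim ((C.warr (C.LamF p₀ ⟨F.1, F.2.1⟩)).toPath.comp q₁) ≫
              C.phim (Quiver.Path.nil.cons T) := by rw [hq₁]
        _ = C.phim (((C.warr (C.LamF p₀ ⟨F.1, F.2.1⟩)).toPath.comp q₁).comp
              (Quiver.Path.nil.cons T)) := (C.phim_comp _ _).symm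
        _ = C.phim ((C.warr (C.LamF p₀ ⟨F.1, F.2.1⟩)).toPath.comp
              (q₁.comp (Quiver.Path.nil.cons T))) := by rw [Quiver.Path.comp_assoc]

lemma exists_front {X : C.Q.V} : ∀ {Y : C.Q.V} (p : Quiver.Path X Y) (w : C.Arr X),
    w ∈ C.DD p →
    ∃ q' : Quiver.Path (C.Q.vert (C.Q.tgt w.1)) Y,
      C.phim p = C.phim ((C.warr w).toPath.comp q') := by
  intro Y p
  induction p with
  | nil => intro w hw; rw [DD_nil] at hw; exact absurd hw (Multiset.notMem_zero w)
  | cons p₀ e ih =>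
      intro w hw
      rw [DD_cons] at hw
      rcases Multiset.mem_add.1 hw with h | h
      · obtain ⟨q₁, hq₁⟩ := ih w h
        refine ⟨q₁.comp (Quiver.Path.nil.cons e), ?_⟩
        calc C.phim (p₀.cons e) = C.phim (p₀.comp (Quiver.Path.nil.cons e)) := rfl
          _ = C.phim p₀ ≫ C.phim (Quiver.Path.nil.cons e) := C.phim_comp _ _
          _ = C.phim ((C.warr w).toPath.comp q₁) ≫ C.phim (Quiver.Path.nil.cons e) := by
              rw [hq₁]
          _ = C.phim (((C.warr w).toPath.comp q₁).comp (Quiver.Path.nil.cons e)) :=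
              (C.phim_comp _ _).symm
          _ = C.phim ((C.warr w).toPath.comp (q₁.comp (Quiver.Path.nil.cons e))) := by
              rw [Quiver.Path.comp_assoc]
      · have h' : w = C.LamF p₀ ⟨e.1, e.2.1⟩ := Multiset.mem_singleton.1 h
        subst h'
        exact C.front_core p₀ e

lemma dd_determines : ∀ (n : ℕ) {X Y : C.Q.V} (p q : Quiver.Path X Y),
    p.length = n → C.DD p = C.DD q → C.phim p = C.phim q := by
  intro n
  induction n using Nat.strong_induction_on with
  | _ n IH =>
    intro X Y p q hlen hDD
    cases p with
    | nil =>
        cases q with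
        | nil => rfl
        | cons q₀ e =>
            exfalso
            rw [DD_nil, DD_cons] at hDD
            exact absurd hDD.symm (by simp)
    | cons p₀ e =>
        have hwp : C.LamF p₀ ⟨e.1, e.2.1⟩ ∈ C.DD (p₀.cons e) := by rw [DD_cons]; simp
        have hwq : C.LamF p₀ ⟨e.1, e.2.1⟩ ∈ C.DD q := hDD ▸ hwp
        obtain ⟨p', hp'⟩ := C.exists_front (p₀.cons e) _ hwp
        obtain ⟨q', hq'⟩ := C.exists_front q _ hwq
        have h1 := (C.phi_eq_inv hp').1
        have h2 := (C.phi_eq_inv hq').1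
        have hcomb : C.DD ((C.warr (C.LamF p₀ ⟨e.1, e.2.1⟩)).toPath.comp p') =
            C.DD ((C.warr (C.LamF p₀ ⟨e.1, e.2.1⟩)).toPath.comp q') := by
          rw [← h1, ← h2, hDD]
        rw [DD_comp, DD_comp] at hcomb
        have hcanc := add_left_cancel hcomb
        have hDD' : C.DD p' = C.DD q' :=
          Multiset.map_injective (C.LamF_injective _) hcanc
        have hlp' : p'.length < n := by
          have hc1 : Multiset.card (C.DD (p₀.cons e)) = n := by rw [C.DD_card, hlen]
          have hc2 : Multiset.card (C.DD ((C.warr (C.LamF p₀ ⟨e.1, e.2.1⟩)).toPath.comp p')) =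
              n := by rw [← h1, hc1]
          rw [C.DD_card, Quiver.Path.length_comp] at hc2
          simp only [Quiver.Hom.toPath, Quiver.Path.length_cons, Quiver.Path.length_nil] at hc2
          omega
        have hfin := IH p'.length hlp' p' q' rfl hDD'
        calc C.phim (p₀.cons e)
            = C.phim ((C.warr (C.LamF p₀ ⟨e.1, e.2.1⟩)).toPath.comp p') := hp'
          _ = C.phim (C.warr (C.LamF p₀ ⟨e.1, e.2.1⟩)).toPath ≫ C.phim p' := C.phim_comp _ _
          _ = C.phim (C.warr (C.LamF p₀ ⟨e.1, e.2.1⟩)).toPath ≫ C.phim q' := by rw [hfin]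
          _ = C.phim ((C.warr (C.LamF p₀ ⟨e.1, e.2.1⟩)).toPath.comp q') := (C.phim_comp _ _).symm
          _ = C.phim q := hq'.symm

end Ctx
end YBAux

theorem structureCategory_leftCancellative
    {Λ : Type u} {A : Type v} (Q : QuiverData Λ A) (hd tl : A → A → A)
    -- σ is a morphism of quivers
    (hs : ∀ x y, Q.tgt x = Q.src y → Q.src (hd x y) = Q.src x)
    (hm : ∀ x y, Q.tgt x = Q.src y → Q.tgt (hd x y) = Q.src (tl x y))
    (ht : ∀ x y, Q.tgt x = Q.src y → Q.tgt (tl x y) = Q.tgt y)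
    -- the Yang–Baxter equation in components
    (yb1 : ∀ x y z, Q.tgt x = Q.src y → Q.tgt y = Q.src z →
      hd (hd x y) (hd (tl x y) z) = hd x (hd y z))
    (yb2 : ∀ x y z, Q.tgt x = Q.src y → Q.tgt y = Q.src z →
      tl (hd x y) (hd (tl x y) z) = hd (tl x (hd y z)) (tl y z))
    (yb3 : ∀ x y z, Q.tgt x = Q.src y → Q.tgt y = Q.src z →
      tl (tl x y) z = tl (tl x (hd y z)) (tl y z))
    -- involutivity
    (inv1 : ∀ x y, Q.tgt x = Q.src y → hd (hd x y) (tl x y) = x)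
    (inv2 : ∀ x y, Q.tgt x = Q.src y → tl (hd x y) (tl x y) = y)
    -- left-non-degeneracy
    (lnd : ∀ x : A, Function.Bijective fun y : {y : A // Q.src y = Q.tgt x} =>
      (⟨hd x y.1, hs x y.1 y.2.symm⟩ : {z : A // Q.src z = Q.src x}))
    :
    -- conclusion: the structure category is left-cancellative
    ∀ (a b c : Q.SC hd tl) (f : a ⟶ b) (x y : b ⟶ c), f ≫ x = f ≫ y → x = y := by
  have lndInj : ∀ x y y', Q.tgt x = Q.src y → Q.tgt x = Q.src y' → hd x y = hd x y' → y = y' := by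
    intro x y y' h h' heq
    have := (lnd x).1 (a₁ := ⟨y, h.symm⟩) (a₂ := ⟨y', h'.symm⟩) (Subtype.ext heq)
    exact congrArg Subtype.val this
  let Cx : YBAux.Ctx Λ A := ⟨Q, hd, tl, hs, hm, ht, yb1, inv1, lndInj⟩
  intro a b c f x y h
  obtain ⟨pf, hpf⟩ := (Quotient.functor (Q.ybRel hd tl)).map_surjective (X := a.as) (Y := b.as) f
  obtain ⟨px, hpx⟩ := (Quotient.functor (Q.ybRel hd tl)).map_surjective (X := b.as) (Y := c.as) x
  obtain ⟨py, hpy⟩ := (Quotient.functor (Q.ybRel hd tl)).map_surjective (X := b.as) (Y := c.as) y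
  rw [← hpf, ← hpx, ← hpy, ← Functor.map_comp, ← Functor.map_comp] at h
  have hDDc : Cx.DD (pf.comp px) = Cx.DD (pf.comp py) := (Cx.phi_eq_inv h).1
  erw [Cx.DD_comp, Cx.DD_comp] at hDDc
  have hDD : Cx.DD px = Cx.DD py :=
    Multiset.map_injective (Cx.LamF_injective pf) (add_left_cancel hDDc)
  have hfin := Cx.dd_determines px.length px py rfl hDD
  rw [← hpx, ← hpy]
  exact hfin
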